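/- arXiv:1909.12043 — 2 statements merged into one kernel-verified Lean document; each statement's English description precedes it below -/
import Mathlib

section
/- Let G be a finite non-solvable group and S a finite solvable group. For (x,s) ∈ G × S, the solvabilizer satisfies Sol_{G×S}((x,s)) = Sol_G(x) × S. -/
open Subgroup

def solvabilizer {G : Type*} [Group G] (x : G) : Set G :=
  {g | IsSolvable (closure ({g, x} : Set G))}

def solSet (G : Type*) [Group G] : Set G :=
  {x | ∀ y : G, IsSolvable (closure ({x, y} : Set G))}

/-- `R` is the solvable radical of `G`: the largest solvable normal subgroup. -/
def IsSolvableRadical {G : Type*} [Group G] (R : Subgroup G) : Prop :=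
  IsSolvable R ∧ R.Normal ∧ ∀ N : Subgroup G, N.Normal → IsSolvable N → N ≤ R

/-- The non-solvable graph: vertices are elements outside the solvable radical `R`,
two distinct vertices adjacent iff they generate a non-solvable subgroup. -/
def nonSolvableGraph (G : Type*) [Group G] (R : Subgroup G) :
    SimpleGraph {x : G // x ∉ R} where
  Adj a b := a ≠ b ∧ ¬ IsSolvable (closure ({(a : G), (b : G)} : Set G))
  symm := ⟨by
    rintro a b ⟨h1, h2⟩
    exact ⟨h1.symm, by rwa [Set.pair_comm]⟩⟩
  loopless := ⟨by rintro a ⟨h1, _⟩; exact h1 rfl⟩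

/-- Neighborhood of `x` in the non-solvable graph, as a subset of `G`. -/
def nsNbhd {G : Type*} [Group G] (R : Subgroup G) (x : G) : Set G :=
  {y | y ∉ R ∧ y ≠ x ∧ ¬ IsSolvable (closure ({x, y} : Set G))}

/-- Neighborhood of `x` in the non-solvable graph where the solvable elements are
described by `solSet`. -/
def nsNbhdSet {G : Type*} [Group G] (x : G) : Set G :=
  {y | y ∉ solSet G ∧ y ≠ x ∧ ¬ IsSolvable (closure ({x, y} : Set G))}


theorem stmt5 {G S : Type*} [Group G] [Fintype G] [Group S] [Fintype S]
    (hG : ¬ IsSolvable G) (hS : IsSolvable S) (x : G) (s : S) :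
    solvabilizer ((x, s) : G × S) = (solvabilizer x) ×ˢ (Set.univ : Set S) := by
  ext ⟨g, t⟩
  simp only [solvabilizer, Set.mem_setOf_eq, Set.mem_prod, Set.mem_univ, and_true]
  constructor
  · intro h
    haveI : Group.IsSolvable _ := h
    have hmap : (closure ({g, x} : Set G)) =
        (closure ({(g, t), (x, s)} : Set (G × S))).map (MonoidHom.fst G S) := by
      rw [MonoidHom.map_closure]
      congr 1
      simp [Set.image_insert_eq]
    rw [hmap]
    exact solvable_of_surjective
      (MonoidHom.subgroupMap_surjective (MonoidHom.fst G S) _)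
  · intro h
    haveI : Group.IsSolvable _ := h
    haveI : Group.IsSolvable S := hS
    have hle : closure ({(g, t), (x, s)} : Set (G × S)) ≤
        (closure ({g, x} : Set G)).prod ⊤ := by
      rw [closure_le]
      rintro ⟨a, b⟩ hab
      rcases hab with h1 | h1 <;> simp_all [Subgroup.mem_prod]
      · exact subset_closure (by simp)
      · exact subset_closure (by simp)
    have : Group.IsSolvable ((closure ({g, x} : Set G)).prod (⊤ : Subgroup S)) :=
      solvable_of_solvable_injective
        (f := (Subgroup.prodEquiv (closure ({g, x} : Set G)) (⊤ : Subgroup S)).toMonoidHom)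
        (Subgroup.prodEquiv _ _).injective
    exact solvable_of_solvable_injective (Subgroup.inclusion_injective hle)
end

section
/- The order of a finite non-solvable group G is bounded in terms of the independence number k of its non-solvable graph: |G| ≤ (3k/2)^(3k/4). Consequently, for each non-negative integer k there are only finitely many finite non-solvable groups whose non-solvable graph has independence number k. -/
open Subgroup

section AuxNS

set_option linter.unusedSectionVars false

variable {G : Type*} [Group G]

lemma aux_solvable_of_le {H K : Subgroup G} (hK : IsSolvable K) (h : H ≤ K) : IsSolvable H :=
  haveI : Group.IsSolvable K := hK
  solvable_of_solvable_injective (Subgroup.inclusion_injective h)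

lemma aux_pairwise {R H : Subgroup G} (hH : IsSolvable H)
    (s : Set {x : G // x ∉ R}) (hs : ∀ a ∈ s, (a : G) ∈ H) :
    s.Pairwise (fun a b => ¬ (nonSolvableGraph G R).Adj a b) := by
  intro a ha b hb _ hadj
  refine hadj.2 (aux_solvable_of_le hH ((closure_le H).mpr ?_))
  rintro y (rfl | rfl)
  exacts [hs a ha, hs b hb]

lemma aux_image (R : Subgroup G) (A : Set G) :
    (Subtype.val '' {a : {x : G // x ∉ R} | (a : G) ∈ A}) = A \ R := by
  ext g
  constructor
  · rintro ⟨a, ha, rfl⟩; exact ⟨ha, a.2⟩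
  · rintro ⟨hg, hgR⟩; exact ⟨⟨g, hgR⟩, hg, rfl⟩

lemma aux_ncard (R : Subgroup G) (A : Set G) :
    {a : {x : G // x ∉ R} | (a : G) ∈ A}.ncard = (A \ R).ncard := by
  rw [← aux_image, Set.ncard_image_of_injective _ Subtype.val_injective]

lemma aux_sup_solvable (R : Subgroup G) (hRs : IsSolvable R) (hRn : R.Normal) (x : G) :
    IsSolvable ↥(R ⊔ zpowers x) := by
  haveI := hRn
  set K := R ⊔ zpowers x with hK
  have hRK : R ≤ K := le_sup_left
  let φ : ↥K →* G ⧸ R := (QuotientGroup.mk' R).comp K.subtype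
  have hker : φ.ker = R.subgroupOf K := by
    rw [show φ.ker = ((QuotientGroup.mk' R).ker).comap K.subtype from
      (MonoidHom.comap_ker _ _).symm, QuotientGroup.ker_mk']
    rfl
  haveI hsolv_ker : Group.IsSolvable ↥(R.subgroupOf K) := by
    haveI : Group.IsSolvable R := hRs
    exact solvable_of_solvable_injective (f := (subgroupOfEquivOfLe hRK).toMonoidHom)
      (subgroupOfEquivOfLe hRK).injective
  haveI hrange : Group.IsSolvable ↥φ.range := by
    have hr : φ.range = zpowers ((QuotientGroup.mk' R) x) := by
      rw [MonoidHom.range_comp, range_subtype, hK, Subgroup.map_sup,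
        (Subgroup.map_eq_bot_iff _).mpr (by rw [QuotientGroup.ker_mk']),
        MonoidHom.map_zpowers, bot_sup_eq]
    rw [hr]
    exact isSolvable_of_comm (fun a b => Subtype.ext (by
      obtain ⟨m, hm⟩ := Subgroup.mem_zpowers_iff.mp a.2
      obtain ⟨n, hn⟩ := Subgroup.mem_zpowers_iff.mp b.2
      simp only [Subgroup.coe_mul, ← hm, ← hn]
      exact zpow_mul_comm _ m n))
  exact solvable_of_ker_le_range (R.subgroupOf K).subtype φ.rangeRestrict
    (by rw [MonoidHom.ker_rangeRestrict, hker, range_subtype])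

lemma aux_exists_x (hG : ¬ IsSolvable G) (R : Subgroup G)
    (hRs : IsSolvable R) (hRn : R.Normal) :
    ∃ x : G, x ∉ R ∧ x * x ∉ R := by
  by_contra h
  push_neg at h
  haveI := hRn
  apply hG
  have hsq : ∀ x : G, x * x ∈ R := fun x => by
    by_cases hx : x ∈ R
    · exact mul_mem hx hx
    · exact h x hx
  have hQ : ∀ q : G ⧸ R, q * q = 1 := by
    intro q
    obtain ⟨x, rfl⟩ := QuotientGroup.mk_surjective q
    rw [← QuotientGroup.mk_mul, QuotientGroup.eq_one_iff]
    exact hsq x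
  have hinv : ∀ q : G ⧸ R, q⁻¹ = q := fun q => inv_eq_of_mul_eq_one_right (hQ q)
  have hcomm : ∀ a b : G ⧸ R, a * b = b * a := fun a b => by
    rw [← hinv (a * b), mul_inv_rev, hinv a, hinv b]
  haveI : Group.IsSolvable (G ⧸ R) := isSolvable_of_comm hcomm
  haveI : Group.IsSolvable R := hRs
  exact solvable_of_ker_le_range R.subtype (QuotientGroup.mk' R)
    (by rw [QuotientGroup.ker_mk', range_subtype])

variable [Fintype G]

lemma aux_bound (R : Subgroup G) {k : ℕ}
    (hmax : ∀ s : Set {x : G // x ∉ R},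
      s.Pairwise (fun a b => ¬ (nonSolvableGraph G R).Adj a b) → s.ncard ≤ k)
    (H : Subgroup G) (hH : IsSolvable H) :
    ((H : Set G) \ R).ncard ≤ k := by
  rw [← aux_ncard]
  exact hmax _ (aux_pairwise hH _ (fun a ha => ha))

lemma aux_card_split (R H : Subgroup G) :
    Nat.card H ≤ Nat.card R + ((H : Set G) \ R).ncard := by
  have h1 : Nat.card H = ((H : Set G)).ncard := by
    rw [← Nat.card_coe_set_eq]; rfl
  have h2 : (H : Set G) = ((H : Set G) ∩ R) ∪ ((H : Set G) \ R) := by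
    rw [Set.inter_union_diff]
  have h3 : ((H : Set G) ∩ R ∪ ((H : Set G) \ R)).ncard
      ≤ ((H : Set G) ∩ R).ncard + ((H : Set G) \ R).ncard :=
    Set.ncard_union_le _ _
  have h4 : ((H : Set G) ∩ R).ncard ≤ (R : Set G).ncard :=
    Set.ncard_le_ncard Set.inter_subset_right (Set.toFinite _)
  have h5 : Nat.card R = ((R : Set G)).ncard := by
    rw [← Nat.card_coe_set_eq]; rfl
  rw [← h2] at h3
  omega

lemma aux_sylow_bound (R : Subgroup G) {k : ℕ}
    (hmax : ∀ s : Set {x : G // x ∉ R},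
      s.Pairwise (fun a b => ¬ (nonSolvableGraph G R).Adj a b) → s.ncard ≤ k)
    (p : ℕ) (hp : p.Prime) :
    p ^ (Nat.card G).factorization p ≤ Nat.card R + k := by
  haveI : Fact p.Prime := ⟨hp⟩
  obtain ⟨P⟩ : Nonempty (Sylow p G) := inferInstance
  have hc : Nat.card P = p ^ (Nat.card G).factorization p := P.card_eq_multiplicity
  have hsolv : IsSolvable ↥(P : Subgroup G) := by
    haveI := (P.isPGroup').isNilpotent
    exact (inferInstance : Group.IsSolvable ↥(P : Subgroup G))
  calc p ^ (Nat.card G).factorization p = Nat.card P := hc.symm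
    _ ≤ Nat.card R + (((P : Subgroup G) : Set G) \ R).ncard := aux_card_split R P
    _ ≤ Nat.card R + k := by
        have := aux_bound R hmax P hsolv
        omega

lemma aux_two_r (hG : ¬ IsSolvable G) (R : Subgroup G)
    (hRs : IsSolvable R) (hRn : R.Normal) {k : ℕ}
    (hmax : ∀ s : Set {x : G // x ∉ R},
      s.Pairwise (fun a b => ¬ (nonSolvableGraph G R).Adj a b) → s.ncard ≤ k) :
    2 * Nat.card R ≤ k := by
  obtain ⟨x, hx, hx2⟩ := aux_exists_x hG R hRs hRn
  set K := R ⊔ zpowers x with hKdef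
  have hKs : IsSolvable K := aux_sup_solvable R hRs hRn x
  set A1 : Set G := (· * x) '' (R : Set G) with hA1
  set A2 : Set G := (· * (x * x)) '' (R : Set G) with hA2
  have hxK : x ∈ K := (le_sup_right : zpowers x ≤ K) (Subgroup.mem_zpowers x)
  have hsub : ∀ g ∈ A1 ∪ A2, g ∈ K := by
    rintro g (⟨ρ, hρ, rfl⟩ | ⟨ρ, hρ, rfl⟩)
    · exact mul_mem (le_sup_left (α := Subgroup G) hρ) hxK
    · exact mul_mem (le_sup_left (α := Subgroup G) hρ) (mul_mem hxK hxK)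
  have hdisjR : (A1 ∪ A2) ∩ (R : Set G) = ∅ := by
    ext g
    simp only [Set.mem_inter_iff, Set.mem_empty_iff_false, iff_false, not_and]
    rintro (⟨ρ, hρ, rfl⟩ | ⟨ρ, hρ, rfl⟩) hmem
    · exact hx (by simpa using mul_mem (inv_mem hρ) hmem)
    · exact hx2 (by simpa using mul_mem (inv_mem hρ) hmem)
  have hdisj12 : Disjoint A1 A2 := by
    rw [Set.disjoint_left]
    rintro g ⟨ρ, hρ, rfl⟩ ⟨ρ', hρ', heq⟩
    simp only at heq
    have hxR : x ∈ R := by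
      have h1 : ρ' * x = ρ := by
        have : (ρ' * x) * x = ρ * x := by rw [← heq]; group
        exact mul_right_cancel this
      have : x = ρ'⁻¹ * ρ := by rw [← h1]; group
      rw [this]; exact mul_mem (inv_mem hρ') hρ
    exact hx hxR
  have hcard1 : A1.ncard = Nat.card R := by
    rw [hA1, Set.ncard_image_of_injective _ (mul_left_injective x),
      ← Nat.card_coe_set_eq]; rfl
  have hcard2 : A2.ncard = Nat.card R := by
    rw [hA2, Set.ncard_image_of_injective _ (mul_left_injective (x * x)),
      ← Nat.card_coe_set_eq]; rfl
  have hunion : (A1 ∪ A2).ncard = 2 * Nat.card R := by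
    rw [Set.ncard_union_eq hdisj12 (Set.toFinite _) (Set.toFinite _), hcard1, hcard2]
    ring
  have hkey : {a : {x : G // x ∉ R} | (a : G) ∈ A1 ∪ A2}.ncard ≤ k :=
    hmax _ (aux_pairwise hKs _ (fun a ha => hsub _ ha))
  rw [aux_ncard] at hkey
  have hdiff : (A1 ∪ A2) \ (R : Set G) = A1 ∪ A2 := by
    ext g
    constructor
    · exact fun hg => hg.1
    · intro hg
      refine ⟨hg, fun hgR => ?_⟩
      have : g ∈ (A1 ∪ A2) ∩ (R : Set G) := ⟨hg, hgR⟩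
      rw [hdisjR] at this
      exact this
  rw [hdiff, hunion] at hkey
  exact hkey

lemma aux_two_primes (hG : ¬ IsSolvable G) : 2 ≤ (Nat.card G).primeFactors.card := by
  by_contra h
  push_neg at h
  interval_cases hcard : (Nat.card G).primeFactors.card
  · have h1 : (Nat.card G).primeFactors = ∅ := Finset.card_eq_zero.mp hcard
    have h2 : Nat.card G = 1 := by
      rcases Nat.primeFactors_eq_empty.mp h1 with h | h
      · exact absurd h Nat.card_pos.ne'
      · exact h
    haveI : Subsingleton G := Nat.card_eq_one_iff_unique.mp h2 |>.1
    exact hG (inferInstance : Group.IsSolvable G)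
  · obtain ⟨p, hp⟩ := Finset.card_eq_one.mp hcard
    have hpmem : p ∈ (Nat.card G).primeFactors := by rw [hp]; exact Finset.mem_singleton_self p
    have hpp : p.Prime := Nat.prime_of_mem_primeFactors hpmem
    haveI : Fact p.Prime := ⟨hpp⟩
    have hcardG : Nat.card G = p ^ (Nat.card G).factorization p := by
      conv_lhs => rw [← Nat.factorization_prod_pow_eq_self (Nat.card_pos (α := G)).ne']
      rw [Finsupp.prod, Nat.support_factorization, hp, Finset.prod_singleton]
    have hpg : IsPGroup p G := IsPGroup.of_card hcardG
    haveI := hpg.isNilpotent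
    exact hG (inferInstance : Group.IsSolvable G)

lemma aux_comm_of_cyclic {H : Type*} [Group H] [IsCyclic H] : IsSolvable H := by
  obtain ⟨g, hg⟩ := IsCyclic.exists_generator (α := H)
  refine isSolvable_of_comm fun a b => ?_
  obtain ⟨m, rfl⟩ := hg a
  obtain ⟨n, rfl⟩ := hg b
  exact zpow_mul_comm g m n

lemma aux_solvable_of_card_six (h6 : Nat.card G = 6) : IsSolvable G := by
  haveI : Fact (Nat.Prime 3) := ⟨by norm_num⟩
  obtain ⟨P⟩ : Nonempty (Sylow 3 G) := inferInstance
  have hfac : (Nat.card G).factorization 3 = 1 := by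
    rw [h6, show (6 : ℕ) = 2 * 3 by norm_num,
      Nat.factorization_mul (by norm_num) (by norm_num)]
    rw [Nat.Prime.factorization (by norm_num), Nat.Prime.factorization (by norm_num)]
    simp
  have hcard : Nat.card P = 3 := by
    rw [P.card_eq_multiplicity, hfac, pow_one]
  have hindex : (P : Subgroup G).index = 2 := by
    have := Subgroup.card_mul_index (P : Subgroup G)
    rw [hcard, h6] at this
    omega
  have hn3 : Nat.card (Sylow 3 G) = 1 := by
    have hdvd : Nat.card (Sylow 3 G) ∣ (P : Subgroup G).index := P.card_dvd_index
    have hmod : Nat.card (Sylow 3 G) % 3 = 1 % 3 := card_sylow_modEq_one 3 G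
    rw [hindex] at hdvd
    have hle : Nat.card (Sylow 3 G) ≤ 2 := Nat.le_of_dvd (by norm_num) hdvd
    omega
  haveI : Subsingleton (Sylow 3 G) := Nat.card_eq_one_iff_unique.mp hn3 |>.1
  haveI hnormal : (P : Subgroup G).Normal := by
    rw [← normalizer_eq_top_iff]
    rw [eq_top_iff]
    intro g _
    exact Sylow.smul_eq_iff_mem_normalizer.mp (Subsingleton.elim _ _)
  haveI hPs : Group.IsSolvable ↥(P : Subgroup G) := by
    haveI : IsCyclic ↥(P : Subgroup G) := isCyclic_of_prime_card (p := 3) hcard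
    exact aux_comm_of_cyclic
  haveI hQs : Group.IsSolvable (G ⧸ (P : Subgroup G)) := by
    have hq2 : Nat.card (G ⧸ (P : Subgroup G)) = 2 := by
      rw [← hindex]; rfl
    haveI : Fact (Nat.Prime 2) := ⟨by norm_num⟩
    haveI : IsCyclic (G ⧸ (P : Subgroup G)) := isCyclic_of_prime_card (p := 2) hq2
    exact aux_comm_of_cyclic
  exact solvable_of_ker_le_range (P : Subgroup G).subtype (QuotientGroup.mk' P)
    (by rw [QuotientGroup.ker_mk', range_subtype])

end AuxNS

lemma aux_prime_count {n M : ℕ} (h9 : 9 ≤ M) (hall : ∀ p ∈ n.primeFactors, p ≤ M) :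
    n.primeFactors.card ≤ M / 2 := by
  have key : n.primeFactors.card ≤ (Finset.Icc 1 (M / 2)).card := by
    apply Finset.card_le_card_of_injOn (fun p => (if p = 2 then 9 else p) / 2)
    · intro p hp
      have hpp : p.Prime := Nat.prime_of_mem_primeFactors hp
      have hpM := hall p hp
      have h2 := hpp.two_le
      by_cases h2' : p = 2
      · simp only [h2', if_pos]
        rw [Finset.mem_coe, Finset.mem_Icc]
        omega
      · simp only [if_neg h2']
        rw [Finset.mem_coe, Finset.mem_Icc]
        omega
    · intro p hp q hq hpq
      have hpp := Nat.prime_of_mem_primeFactors hp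
      have hqp := Nat.prime_of_mem_primeFactors hq
      simp only at hpq
      have hpodd : p ≠ 2 → p % 2 = 1 := fun h => Nat.odd_iff.mp (hpp.odd_of_ne_two h)
      have hqodd : q ≠ 2 → q % 2 = 1 := fun h => Nat.odd_iff.mp (hqp.odd_of_ne_two h)
      by_cases h2 : p = 2 <;> by_cases h2' : q = 2
      · rw [h2, h2']
      · exfalso
        rw [if_pos h2, if_neg h2'] at hpq
        have := hqodd h2'
        have hq9 : q = 9 := by omega
        rw [hq9] at hqp
        norm_num at hqp
      · exfalso
        rw [if_neg h2, if_pos h2'] at hpq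
        have := hpodd h2
        have hp9 : p = 9 := by omega
        rw [hp9] at hpp
        norm_num at hpp
      · rw [if_neg h2, if_neg h2'] at hpq
        have := hpodd h2
        have := hqodd h2'
        omega
  rwa [Nat.card_Icc, Nat.add_sub_cancel] at key

lemma aux_pow_cap {p a e B : ℕ} (hp : 1 < p) (h : p ^ a ≤ B) (hB : B < p ^ (e + 1)) :
    p ^ a ≤ p ^ e := by
  have ha : a < e + 1 := (Nat.pow_lt_pow_iff_right hp).mp (lt_of_le_of_lt h hB)
  exact Nat.pow_le_pow_right (le_of_lt hp) (by omega)

lemma aux_rpow_final {x y : ℝ} (n c e : ℕ) (hx : 1 ≤ x) (hn : n ≤ c)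
    (h1 : (c : ℝ) ≤ x ^ e) (h2 : (e : ℝ) ≤ y) : (n : ℝ) ≤ x ^ y := by
  calc (n : ℝ) ≤ (c : ℝ) := by exact_mod_cast hn
    _ ≤ x ^ e := h1
    _ = x ^ (e : ℝ) := (Real.rpow_natCast x e).symm
    _ ≤ x ^ y := Real.rpow_le_rpow_of_exponent_le hx h2

theorem stmt19 {G : Type*} [Group G] [Fintype G] (hG : ¬ IsSolvable G)
    (R : Subgroup G) (hR : IsSolvableRadical R) (k : ℕ)
    (hex : ∃ s : Set {x : G // x ∉ R},
      s.Pairwise (fun a b => ¬ (nonSolvableGraph G R).Adj a b) ∧ s.ncard = k)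
    (hmax : ∀ s : Set {x : G // x ∉ R},
      s.Pairwise (fun a b => ¬ (nonSolvableGraph G R).Adj a b) → s.ncard ≤ k) :
    (Fintype.card G : ℝ) ≤ (3 * (k : ℝ) / 2) ^ (3 * (k : ℝ) / 4) := by
  classical
  obtain ⟨hRs, hRn, -⟩ := hR
  clear hex
  set r := Nat.card R with hrdef
  have hr1 : 1 ≤ r := Nat.card_pos
  have h2r : 2 * r ≤ k := aux_two_r hG R hRs hRn hmax
  set n := Nat.card G with hndef
  have hn0 : n ≠ 0 := Nat.card_pos.ne'
  have hsyl : ∀ p : ℕ, p.Prime → p ^ n.factorization p ≤ r + k :=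
    fun p hp => aux_sylow_bound R hmax p hp
  have hprod : ∏ p ∈ n.primeFactors, p ^ n.factorization p = n := by
    conv_rhs => rw [← Nat.factorization_prod_pow_eq_self hn0]
    rw [Finsupp.prod, Nat.support_factorization]
  have hple : ∀ p ∈ n.primeFactors, p ≤ r + k := by
    intro p hp
    have hv : n.factorization p ≠ 0 := by
      have := Finsupp.mem_support_iff.mp (by rwa [Nat.support_factorization])
      exact this
    exact le_trans (Nat.le_self_pow hv p) (hsyl p (Nat.prime_of_mem_primeFactors hp))
  suffices hfin : (n : ℝ) ≤ (3 * (k : ℝ) / 2) ^ (3 * (k : ℝ) / 4) by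
    rwa [hndef, Nat.card_eq_fintype_card] at hfin
  by_cases hk6 : 6 ≤ k
  · -- general case, k ≥ 6
    set t := n.primeFactors.card with htdef
    have hnle : n ≤ (r + k) ^ t := by
      rw [← hprod]
      exact Finset.prod_le_pow_card _ _ _
        (fun p hp => hsyl p (Nat.prime_of_mem_primeFactors hp))
    set M := 3 * k / 2 with hMdef
    have h9M : 9 ≤ M := by omega
    have hpM : ∀ p ∈ n.primeFactors, p ≤ M := fun p hp => by
      have := hple p hp; omega
    have ht : t ≤ M / 2 := aux_prime_count h9M hpM
    have h4t : 4 * t ≤ 3 * k := by omega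
    have hrk : ((r : ℝ) + k) ≤ 3 * k / 2 := by
      have h1 : ((2 * r : ℕ) : ℝ) ≤ (k : ℕ) := Nat.cast_le.mpr h2r
      push_cast at h1
      linarith
    have hbase1 : (1 : ℝ) ≤ 3 * k / 2 := by
      have : (6 : ℝ) ≤ (k : ℝ) := by exact_mod_cast hk6
      linarith
    calc (n : ℝ) ≤ (((r + k) ^ t : ℕ) : ℝ) := Nat.cast_le.mpr hnle
      _ = ((r : ℝ) + k) ^ t := by push_cast; ring
      _ ≤ (3 * (k : ℝ) / 2) ^ t := pow_le_pow_left₀ (by positivity) hrk t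
      _ = (3 * (k : ℝ) / 2) ^ ((t : ℕ) : ℝ) := (Real.rpow_natCast _ t).symm
      _ ≤ (3 * (k : ℝ) / 2) ^ (3 * (k : ℝ) / 4) := by
          apply Real.rpow_le_rpow_of_exponent_le hbase1
          have : ((4 * t : ℕ) : ℝ) ≤ ((3 * k : ℕ) : ℝ) := Nat.cast_le.mpr h4t
          push_cast at this
          linarith
  · -- small cases, 2 ≤ k ≤ 5
    push_neg at hk6
    have hk2 : 2 ≤ k := by omega
    have hr2 : r ≤ 2 := by omega
    have hB7 : r + k ≤ 7 := by omega
    have hsub : n.primeFactors ⊆ {2, 3, 5, 7} := by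
      intro p hp
      have h1 := hple p hp
      have hpp := Nat.prime_of_mem_primeFactors hp
      have h2 := hpp.two_le
      have h7 : p ≤ 7 := le_trans h1 hB7
      interval_cases p
      · decide
      · decide
      · exact absurd hpp (by norm_num)
      · decide
      · exact absurd hpp (by norm_num)
      · decide
    have hzero : ∀ p : ℕ, p ∉ n.primeFactors → p ^ n.factorization p = 1 := by
      intro p hp
      have : n.factorization p = 0 := by
        by_contra h
        exact hp (by rw [← Nat.support_factorization]; exact Finsupp.mem_support_iff.mpr h)
      rw [this, pow_zero]
    have hnle4 : n ≤ 2 ^ n.factorization 2 * 3 ^ n.factorization 3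
        * 5 ^ n.factorization 5 * 7 ^ n.factorization 7 := by
      calc n = ∏ p ∈ n.primeFactors, p ^ n.factorization p := hprod.symm
        _
          ≤ ∏ p ∈ ({2, 3, 5, 7} : Finset ℕ), p ^ n.factorization p := by
            apply Finset.prod_le_prod_of_subset_of_one_le' hsub
            intro i _ hni
            rw [hzero i hni]
        _ = 2 ^ n.factorization 2 * 3 ^ n.factorization 3
            * 5 ^ n.factorization 5 * 7 ^ n.factorization 7 := by
            rw [show ({2, 3, 5, 7} : Finset ℕ) = insert 2 (insert 3 (insert 5 {7})) from rfl,
              Finset.prod_insert (by decide), Finset.prod_insert (by decide),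
              Finset.prod_insert (by decide), Finset.prod_singleton]
            ring
    have hnot : ∀ p : ℕ, p.Prime → r + k < p → p ^ n.factorization p = 1 := by
      intro p hpp hlt
      apply hzero
      intro hmem
      have := hple p hmem
      omega
    have hf2 : 2 ^ n.factorization 2 ≤ 4 := by
      have h := aux_pow_cap (p := 2) (e := 2) (B := 7) (by norm_num)
        (le_trans (hsyl 2 (by norm_num)) hB7) (by norm_num)
      exact le_trans h (by norm_num)
    have hf3 : 3 ^ n.factorization 3 ≤ 3 := by
      have h := aux_pow_cap (p := 3) (e := 1) (B := 7) (by norm_num)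
        (le_trans (hsyl 3 (by norm_num)) hB7) (by norm_num)
      exact le_trans h (by norm_num)
    have hf5 : 5 ^ n.factorization 5 ≤ 5 := by
      have h := aux_pow_cap (p := 5) (e := 1) (B := 7) (by norm_num)
        (le_trans (hsyl 5 (by norm_num)) hB7) (by norm_num)
      exact le_trans h (by norm_num)
    have hf7 : 7 ^ n.factorization 7 ≤ 7 := by
      have h := aux_pow_cap (p := 7) (e := 1) (B := 7) (by norm_num)
        (le_trans (hsyl 7 (by norm_num)) hB7) (by norm_num)
      exact le_trans h (by norm_num)
    interval_cases k
    · -- k = 2 : contradiction, G would have order 6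
      exfalso
      have hrr : r = 1 := by omega
      have hsub2 : n.primeFactors ⊆ {2, 3} := by
        intro p hp
        have h1 := hple p hp
        have hpp := Nat.prime_of_mem_primeFactors hp
        have h2 := hpp.two_le
        have h3 : p ≤ 3 := by omega
        interval_cases p
        · decide
        · decide
      have ht2 : 2 ≤ n.primeFactors.card := aux_two_primes hG
      have hPF : n.primeFactors = {2, 3} :=
        Finset.eq_of_subset_of_card_le hsub2 (le_trans (by decide) ht2)
      have h2mem : (2 : ℕ) ∈ n.primeFactors := by rw [hPF]; decide
      have h3mem : (3 : ℕ) ∈ n.primeFactors := by rw [hPF]; decide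
      have hv2 : n.factorization 2 ≠ 0 :=
        Finsupp.mem_support_iff.mp (by rw [Nat.support_factorization]; exact h2mem)
      have hv3 : n.factorization 3 ≠ 0 :=
        Finsupp.mem_support_iff.mp (by rw [Nat.support_factorization]; exact h3mem)
      have hc2 : 2 ^ n.factorization 2 ≤ 3 := by
        have := hsyl 2 (by norm_num); omega
      have hc3 : 3 ^ n.factorization 3 ≤ 3 := by
        have := hsyl 3 (by norm_num); omega
      have he2 : n.factorization 2 = 1 := by
        have : n.factorization 2 < 2 :=
          (Nat.pow_lt_pow_iff_right (by norm_num)).mp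
            (lt_of_le_of_lt hc2 (by norm_num : (3:ℕ) < 2 ^ 2))
        omega
      have he3 : n.factorization 3 = 1 := by
        have : n.factorization 3 < 2 :=
          (Nat.pow_lt_pow_iff_right (by norm_num)).mp
            (lt_of_le_of_lt hc3 (by norm_num : (3:ℕ) < 3 ^ 2))
        omega
      have hn6 : n = 6 := by
        have h := hprod
        rw [hPF, show ({2, 3} : Finset ℕ) = insert 2 {3} from rfl,
          Finset.prod_insert (by decide), Finset.prod_singleton, he2, he3] at h
        norm_num at h
        omega
      exact hG (aux_solvable_of_card_six hn6)
    · -- k = 3 : n ≤ 12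
      have hrr : r = 1 := by omega
      have h5 : 5 ^ n.factorization 5 = 1 := hnot 5 (by norm_num) (by omega)
      have h7 : 7 ^ n.factorization 7 = 1 := hnot 7 (by norm_num) (by omega)
      rw [h5, h7] at hnle4
      have hn12 : n ≤ 12 := by
        refine le_trans hnle4 (le_trans ?_ (by norm_num : 4 * 3 * 1 * 1 ≤ 12))
        gcongr
      exact aux_rpow_final n 12 2 (by norm_num) hn12 (by norm_num) (by norm_num)
    · -- k = 4 : n ≤ 60
      have h7 : 7 ^ n.factorization 7 = 1 := hnot 7 (by norm_num) (by omega)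
      rw [h7] at hnle4
      have hn60 : n ≤ 60 := by
        refine le_trans hnle4 (le_trans ?_ (by norm_num : 4 * 3 * 5 * 1 ≤ 60))
        gcongr
      exact aux_rpow_final n 60 3 (by norm_num) hn60 (by norm_num) (by norm_num)
    · -- k = 5 : n ≤ 420
      have hn420 : n ≤ 420 := by
        refine le_trans hnle4 (le_trans ?_ (by norm_num : 4 * 3 * 5 * 7 ≤ 420))
        gcongr
      exact aux_rpow_final n 420 3 (by norm_num) hn420 (by norm_num) (by norm_num)
end
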